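/- Let x, h ∈ ℝ^N with ‖Ah‖₂ ≤ 2ε, where A is an n×N real matrix with restricted isometry constants δ_{ak} and δ_{(a+1)k} (a > 1, ak ∈ ℤ). Let T0 ⊆ {1,…,N} with |T0| = k, let T̃ ⊆ {1,…,N} with |T̃| = ρk, |T̃ ∩ T0| = αρk, and a ≥ (1−α)ρ; set T̃_α = T0 ∩ T̃ and γ = ω + (1−ω)·√(1+ρ−2αρ) for 0 ≤ ω ≤ 1. Suppose the weighted ℓ1 cone constraint holds: ‖(x+h)‖_{1,w} ≤ ‖x‖_{1,w} with w_i = ω on T̃ and 1 on T̃ᶜ. Partition T0ᶜ into blocks T1, T2, … of size ak by decreasing magnitude of h and set T01 = T0 ∪ T1. If √(1−δ_{(a+1)k}) − (γ/√a)·√(1+δ_{ak}) > 0, then ‖h_{T01}‖₂ ≤ (2ε + 2·(√(1+δ_{ak})/√(ak))·(ω·‖x_{T0ᶜ}‖₁ + (1−ω)·‖x_{T̃ᶜ∩T0ᶜ}‖₁)) / (√(1−δ_{(a+1)k}) − (γ/√a)·√(1+δ_{ak})). -/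

import Mathlib

open scoped BigOperators

noncomputable section

/-- The ℓ1 norm of a finite real vector. -/
def l1norm {ι : Type*} [Fintype ι] (v : ι → ℝ) : ℝ := ∑ i, |v i|

/-- The Euclidean (ℓ2) norm of a finite real vector. -/
def l2norm {ι : Type*} [Fintype ι] (v : ι → ℝ) : ℝ := Real.sqrt (∑ i, (v i) ^ 2)

/-- The ℓ∞ norm of a finite real vector. -/
def linfnorm {ι : Type*} [Fintype ι] (v : ι → ℝ) : ℝ := ⨆ i, |v i|

/-- The weighted ℓ1 norm `‖v‖_{1,w} = ∑ i, w i * |v i|`. -/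
def wl1norm {ι : Type*} [Fintype ι] (w v : ι → ℝ) : ℝ := ∑ i, w i * |v i|

/-- `restrict v S` is the vector equal to `v` on `S` and zero outside `S`. -/
def restrict {ι : Type*} [DecidableEq ι] (v : ι → ℝ) (S : Finset ι) : ι → ℝ :=
  fun i => if i ∈ S then v i else 0

/-- A vector is `m`-sparse if it has at most `m` nonzero entries. -/
def IsSparse {ι : Type*} [Fintype ι] (m : ℕ) (v : ι → ℝ) : Prop :=
  (Finset.univ.filter (fun i => v i ≠ 0)).card ≤ m

/-- The restricted isometry constant `δ_m` of a matrix `A`: the smallest `δ ≥ 0` such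
that `(1-δ)‖u‖₂² ≤ ‖Au‖₂² ≤ (1+δ)‖u‖₂²` for every `m`-sparse vector `u`. -/
def ripConst {n N : ℕ} (A : Matrix (Fin n) (Fin N) ℝ) (m : ℕ) : ℝ :=
  sInf {δ : ℝ | 0 ≤ δ ∧ ∀ u : Fin N → ℝ, IsSparse m u →
    (1 - δ) * (∑ i, (u i) ^ 2) ≤ (∑ j, (A.mulVec u j) ^ 2) ∧
    (∑ j, (A.mulVec u j) ^ 2) ≤ (1 + δ) * (∑ i, (u i) ^ 2)}

end

noncomputable section Helpers
set_option linter.unusedSectionVars false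
variable {ι : Type*} [Fintype ι] [DecidableEq ι]

lemma l1norm_restrict (v : ι → ℝ) (U : Finset ι) :
    l1norm (restrict v U) = ∑ i ∈ U, |v i| := by
  unfold l1norm restrict
  calc ∑ i, |if i ∈ U then v i else 0| = ∑ i, (if i ∈ U then |v i| else 0) := by
        apply Finset.sum_congr rfl; intro i _; split <;> simp
  _ = ∑ i ∈ U, |v i| := by rw [Finset.sum_ite_mem, Finset.univ_inter]

lemma sum_sq_restrict (v : ι → ℝ) (U : Finset ι) :
    ∑ i, (restrict v U i) ^ 2 = ∑ i ∈ U, (v i) ^ 2 := by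
  unfold restrict
  calc ∑ i, (if i ∈ U then v i else 0) ^ 2 = ∑ i, (if i ∈ U then (v i)^2 else 0) := by
        apply Finset.sum_congr rfl; intro i _; split <;> simp
  _ = ∑ i ∈ U, (v i)^2 := by rw [Finset.sum_ite_mem, Finset.univ_inter]

lemma l2norm_restrict (v : ι → ℝ) (U : Finset ι) :
    l2norm (restrict v U) = Real.sqrt (∑ i ∈ U, (v i) ^ 2) := by
  rw [l2norm, sum_sq_restrict]

lemma l2norm_nonneg (v : ι → ℝ) : 0 ≤ l2norm v := Real.sqrt_nonneg _

lemma l2norm_neg (v : ι → ℝ) : l2norm (-v) = l2norm v := by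
  unfold l2norm; congr 1; apply Finset.sum_congr rfl; intro i _; simp [neg_pow]

lemma l2norm_add_le (u v : ι → ℝ) : l2norm (u + v) ≤ l2norm u + l2norm v := by
  unfold l2norm
  have hu : (0:ℝ) ≤ ∑ i, (u i)^2 := Finset.sum_nonneg (fun i _ => sq_nonneg _)
  have hv : (0:ℝ) ≤ ∑ i, (v i)^2 := Finset.sum_nonneg (fun i _ => sq_nonneg _)
  have hcs : ∑ i, u i * v i ≤ Real.sqrt (∑ i, (u i)^2) * Real.sqrt (∑ i, (v i)^2) := by
    have h := Finset.sum_mul_sq_le_sq_mul_sq Finset.univ u v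
    have h2 : (Real.sqrt (∑ i, (u i)^2) * Real.sqrt (∑ i, (v i)^2))^2
        = (∑ i, (u i)^2) * ∑ i, (v i)^2 := by
      rw [mul_pow, Real.sq_sqrt hu, Real.sq_sqrt hv]
    calc ∑ i, u i * v i ≤ |∑ i, u i * v i| := le_abs_self _
    _ = Real.sqrt ((∑ i, u i * v i)^2) := (Real.sqrt_sq_eq_abs _).symm
    _ ≤ Real.sqrt ((Real.sqrt (∑ i, (u i)^2) * Real.sqrt (∑ i, (v i)^2))^2) := by
        apply Real.sqrt_le_sqrt; rw [h2]; exact h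
    _ = _ := Real.sqrt_sq (by positivity)
  have h1 : ∑ i, (u i + v i) ^ 2
      ≤ (Real.sqrt (∑ i, (u i)^2) + Real.sqrt (∑ i, (v i)^2)) ^ 2 := by
    have hexp : ∑ i, (u i + v i)^2
        = (∑ i, (u i)^2) + 2 * (∑ i, u i * v i) + ∑ i, (v i)^2 := by
      rw [Finset.mul_sum, ← Finset.sum_add_distrib, ← Finset.sum_add_distrib]
      apply Finset.sum_congr rfl; intro i _; ring
    rw [hexp, add_sq]
    nlinarith [Real.sq_sqrt hu, Real.sq_sqrt hv]
  calc Real.sqrt (∑ i, ((u+v) i)^2) = Real.sqrt (∑ i, (u i + v i)^2) := rfl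
  _ ≤ Real.sqrt ((Real.sqrt (∑ i, (u i)^2) + Real.sqrt (∑ i, (v i)^2))^2) :=
      Real.sqrt_le_sqrt h1
  _ = _ := Real.sqrt_sq (by positivity)

lemma l2norm_zero : l2norm (0 : ι → ℝ) = 0 := by
  unfold l2norm; simp

lemma l2norm_sum_le {β : Type*} (J : Finset β) (v : β → ι → ℝ) :
    l2norm (∑ j ∈ J, v j) ≤ ∑ j ∈ J, l2norm (v j) := by
  classical
  induction J using Finset.induction with
  | empty => simp [l2norm_zero]
  | insert _ _ hj ih =>
    rw [Finset.sum_insert hj, Finset.sum_insert hj]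
    exact le_trans (l2norm_add_le _ _) (by linarith)

lemma l1_le_sqrt_card_mul (v : ι → ℝ) (U : Finset ι) :
    ∑ i ∈ U, |v i| ≤ Real.sqrt U.card * Real.sqrt (∑ i ∈ U, (v i)^2) := by
  have h := Finset.sum_mul_sq_le_sq_mul_sq U (fun _ => (1:ℝ)) (fun i => |v i|)
  simp only [one_mul, one_pow, Finset.sum_const, nsmul_eq_mul, mul_one, sq_abs] at h
  have h0 : (0:ℝ) ≤ ∑ i ∈ U, |v i| := Finset.sum_nonneg (fun i _ => abs_nonneg _)
  have := Real.sqrt_le_sqrt h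
  rwa [Real.sqrt_sq h0, Real.sqrt_mul (by positivity)] at this

lemma restrict_empty (v : ι → ℝ) : restrict v ∅ = 0 := by
  funext i; simp [restrict]

lemma restrict_union (v : ι → ℝ) {U V : Finset ι} (hUV : Disjoint U V) :
    restrict v (U ∪ V) = restrict v U + restrict v V := by
  funext i
  simp only [restrict, Pi.add_apply, Finset.mem_union]
  by_cases hU : i ∈ U
  · have hV : i ∉ V := fun hV => (Finset.disjoint_left.mp hUV hU) hV
    simp [hU, hV]
  · by_cases hV : i ∈ V <;> simp [hU, hV]

lemma restrict_add_compl (v : ι → ℝ) (U : Finset ι) :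
    restrict v U + restrict v Uᶜ = v := by
  funext i
  simp only [restrict, Pi.add_apply, Finset.mem_compl]
  by_cases hU : i ∈ U <;> simp [hU]

lemma restrict_biUnion {β : Type*} [DecidableEq β] (v : ι → ℝ) (J : Finset β)
    (B : β → Finset ι) (hd : (J : Set β).PairwiseDisjoint B) :
    restrict v (J.biUnion B) = ∑ j ∈ J, restrict v (B j) := by
  funext i
  rw [Finset.sum_apply]
  by_cases hi : i ∈ J.biUnion B
  · obtain ⟨j₀, hj₀J, hij₀⟩ := Finset.mem_biUnion.mp hi
    rw [Finset.sum_eq_single j₀]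
    · simp [restrict, hi, hij₀]
    · intro j hj hne
      have : i ∉ B j := by
        intro hmem
        exact (Finset.disjoint_left.mp (hd hj hj₀J hne) hmem) hij₀
      simp [restrict, this]
    · intro hj; exact absurd hj₀J hj
  · have hall : ∀ j ∈ J, restrict v (B j) i = 0 := by
      intro j hj
      have : i ∉ B j := fun hmem => hi (Finset.mem_biUnion.mpr ⟨j, hj, hmem⟩)
      simp [restrict, this]
    rw [Finset.sum_eq_zero hall]
    simp [restrict, hi]

lemma isSparse_restrict (v : ι → ℝ) (U : Finset ι) {m : ℕ} (hm : U.card ≤ m) :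
    IsSparse m (restrict v U) := by
  refine le_trans (Finset.card_le_card ?_) hm
  intro i hi
  simp only [Finset.mem_filter, restrict] at hi
  by_contra hU
  exact (Finset.mem_filter.mp hi).2 (if_neg hU)

lemma mulVec_finset_sum {n N : ℕ} (A : Matrix (Fin n) (Fin N) ℝ) {β : Type*}
    (J : Finset β) (v : β → Fin N → ℝ) :
    A.mulVec (∑ j ∈ J, v j) = ∑ j ∈ J, A.mulVec (v j) := by
  classical
  induction J using Finset.induction with
  | empty => simp [Matrix.mulVec_zero]
  | insert _ _ hj ih => rw [Finset.sum_insert hj, Finset.sum_insert hj, Matrix.mulVec_add, ih]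

lemma sum_sq_le_of_subset {U V : Finset ι} (v : ι → ℝ) (hUV : U ⊆ V) :
    ∑ i ∈ U, (v i)^2 ≤ ∑ i ∈ V, (v i)^2 :=
  Finset.sum_le_sum_of_subset_of_nonneg hUV (fun i _ _ => sq_nonneg _)

lemma ripConst_spec {n N : ℕ} (A : Matrix (Fin n) (Fin N) ℝ) (m : ℕ) :
    0 ≤ ripConst A m ∧ ∀ u : Fin N → ℝ, IsSparse m u →
      (1 - ripConst A m) * (∑ i, (u i) ^ 2) ≤ (∑ j, (A.mulVec u j) ^ 2) ∧
      (∑ j, (A.mulVec u j) ^ 2) ≤ (1 + ripConst A m) * (∑ i, (u i) ^ 2) := by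
  classical
  set S := {δ : ℝ | 0 ≤ δ ∧ ∀ u : Fin N → ℝ, IsSparse m u →
    (1 - δ) * (∑ i, (u i) ^ 2) ≤ (∑ j, (A.mulVec u j) ^ 2) ∧
    (∑ j, (A.mulVec u j) ^ 2) ≤ (1 + δ) * (∑ i, (u i) ^ 2)} with hS
  have hbound : ∀ u : Fin N → ℝ,
      (∑ j, (A.mulVec u j) ^ 2) ≤ (∑ j, ∑ i, (A j i)^2) * (∑ i, (u i) ^ 2) := by
    intro u
    rw [Finset.sum_mul]
    apply Finset.sum_le_sum
    intro j _
    have := Finset.sum_mul_sq_le_sq_mul_sq Finset.univ (fun i => A j i) u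
    simpa [Matrix.mulVec, dotProduct] using this
  have hCnn : (0:ℝ) ≤ ∑ j, ∑ i, (A j i)^2 :=
    Finset.sum_nonneg fun j _ => Finset.sum_nonneg fun i _ => sq_nonneg _
  have hmem : (1 + ∑ j, ∑ i, (A j i)^2) ∈ S := by
    constructor
    · linarith
    · intro u _
      have hu : (0:ℝ) ≤ ∑ i, (u i)^2 := Finset.sum_nonneg fun i _ => sq_nonneg _
      have hb := hbound u
      constructor
      · have : (1 - (1 + ∑ j, ∑ i, (A j i)^2)) * (∑ i, (u i) ^ 2) ≤ 0 := by
          apply mul_nonpos_of_nonpos_of_nonneg <;> linarith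
        have h0 : (0:ℝ) ≤ ∑ j, (A.mulVec u j)^2 :=
          Finset.sum_nonneg fun j _ => sq_nonneg _
        linarith
      · nlinarith
  have hne : S.Nonempty := ⟨_, hmem⟩
  have hbdd : BddBelow S := ⟨0, fun δ hδ => hδ.1⟩
  have h0 : 0 ≤ ripConst A m := le_csInf hne fun δ hδ => hδ.1
  refine ⟨h0, fun u hu => ?_⟩
  have hu2 : (0:ℝ) ≤ ∑ i, (u i)^2 := Finset.sum_nonneg fun i _ => sq_nonneg _
  have key : ∀ ε : ℝ, 0 < ε →
      (1 - ripConst A m) * (∑ i, (u i) ^ 2) ≤ (∑ j, (A.mulVec u j) ^ 2) + ε ∧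
      (∑ j, (A.mulVec u j) ^ 2) ≤ (1 + ripConst A m) * (∑ i, (u i) ^ 2) + ε := by
    intro ε hε
    have hεc : 0 < ε / ((∑ i, (u i)^2) + 1) := by positivity
    obtain ⟨δ, hδS, hδlt⟩ := Real.lt_sInf_add_pos hne hεc
    have hδlt' : δ - ripConst A m < ε / ((∑ i, (u i)^2) + 1) := by
      have : ripConst A m = sInf S := rfl
      linarith [hδlt]
    have hmul : (δ - ripConst A m) * (∑ i, (u i)^2) ≤ ε := by
      rcases le_or_gt (δ - ripConst A m) 0 with hc | hc
      · have := mul_nonpos_of_nonpos_of_nonneg hc hu2; linarith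
      · have h1 : (δ - ripConst A m) * (∑ i, (u i)^2)
            ≤ (ε / ((∑ i, (u i)^2) + 1)) * (∑ i, (u i)^2) := by
          apply mul_le_mul_of_nonneg_right (le_of_lt hδlt') hu2
        have h2 : (ε / ((∑ i, (u i)^2) + 1)) * (∑ i, (u i)^2) ≤ ε := by
          rw [div_mul_eq_mul_div, div_le_iff₀ (by positivity)]
          nlinarith
        linarith
    obtain ⟨hl, hr⟩ := hδS.2 u hu
    constructor <;> nlinarith
  constructor
  · by_contra hcon
    push_neg at hcon
    obtain ⟨h1, _⟩ := key (((1 - ripConst A m) * (∑ i, (u i) ^ 2) - (∑ j, (A.mulVec u j) ^ 2))/2) (by linarith)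
    linarith
  · by_contra hcon
    push_neg at hcon
    obtain ⟨_, h2⟩ := key (((∑ j, (A.mulVec u j) ^ 2) - (1 + ripConst A m) * (∑ i, (u i) ^ 2))/2) (by linarith)
    linarith

/-- Order on indices: sort by decreasing `|v|`, ties broken by index. -/
def sortRel {ι : Type*} [LinearOrder ι] (v : ι → ℝ) : ι → ι → Prop :=
  fun i j => |v j| < |v i| ∨ (|v i| = |v j| ∧ i ≤ j)

instance sortRel_decidable {ι : Type*} [LinearOrder ι] (v : ι → ℝ) :
    DecidableRel (sortRel v) := fun i j => by unfold sortRel; infer_instance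

instance sortRel_trans {ι : Type*} [LinearOrder ι] (v : ι → ℝ) :
    IsTrans ι (sortRel v) := ⟨by
  intro i j l hij hjl
  rcases hij with hij | ⟨hij, hij'⟩ <;> rcases hjl with hjl | ⟨hjl, hjl'⟩
  · exact Or.inl (lt_trans hjl hij)
  · exact Or.inl (hjl ▸ hij)
  · exact Or.inl (hij ▸ hjl)
  · exact Or.inr ⟨hij.trans hjl, hij'.trans hjl'⟩⟩

instance sortRel_antisymm {ι : Type*} [LinearOrder ι] (v : ι → ℝ) :
    IsAntisymm ι (sortRel v) := ⟨by
  intro i j hij hji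
  rcases hij with hij | ⟨_, hij'⟩ <;> rcases hji with hji | ⟨_, hji'⟩
  · exact absurd (lt_trans hij hji) (lt_irrefl _)
  · exact absurd hij (by simp [*, lt_irrefl])
  · exact absurd hji (by simp [*, lt_irrefl])
  · exact le_antisymm hij' hji'⟩

instance sortRel_total {ι : Type*} [LinearOrder ι] (v : ι → ℝ) :
    IsTotal ι (sortRel v) := ⟨by
  intro i j
  rcases lt_trichotomy |v i| |v j| with hlt | heq | hgt
  · exact Or.inr (Or.inl hlt)
  · rcases le_total i j with hij | hji
    · exact Or.inl (Or.inr ⟨heq, hij⟩)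
    · exact Or.inr (Or.inr ⟨heq.symm, hji⟩)
  · exact Or.inl (Or.inl hgt)⟩


end Helpers

set_option maxHeartbeats 3000000 in
/-- the bound (13) of the paper on `‖h_{T01}‖₂`, combining feasibility,
the weighted ℓ1 cone constraint, the RIP, and the cardinality fact
`|(T0 ∪ T̃) \ T̃_α| = (1+ρ-2αρ)k`, where `T̃_α = T0 ∩ T̃` and `T01 = T0 ∪ T 1`. -/
theorem hT01_bound
    {n N : ℕ} (A : Matrix (Fin n) (Fin N) ℝ)
    (x h : Fin N → ℝ) (T0 Tt : Finset (Fin N)) (T : ℕ → Finset (Fin N))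
    (k ak : ℕ) (a ρ α ω ε γ δak δa1k : ℝ) (w : Fin N → ℝ)
    (ha : 1 < a) (hk : 1 ≤ k) (hak : (ak : ℝ) = a * k)
    -- `δak` and `δa1k` are the restricted isometry constants of `A` at levels `ak`, `(a+1)k`
    (hδak : δak = ripConst A ak)
    (hδa1k : δa1k = ripConst A (ak + k))
    -- cardinalities: `|T0| = k`, `|T̃| = ρk`, `|T̃ ∩ T0| = αρk`, and `a ≥ (1-α)ρ`
    (hT0card : T0.card = k)
    (hTtcard : (Tt.card : ℝ) = ρ * k)
    (hTtT0card : ((Tt ∩ T0).card : ℝ) = α * ρ * k)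
    (haαρ : (1 - α) * ρ ≤ a)
    -- the weight `ω ∈ [0,1]` and `γ = ω + (1-ω)√(1+ρ-2αρ)`
    (hω0 : 0 ≤ ω) (hω1 : ω ≤ 1)
    (hγ : γ = ω + (1 - ω) * Real.sqrt (1 + ρ - 2 * α * ρ))
    -- `‖Ah‖₂ ≤ 2ε`
    (hAh : l2norm (A.mulVec h) ≤ 2 * ε)
    -- the weighted ℓ1 cone constraint with weights `ω` on `Tt`, `1` on `Ttᶜ`
    (hw : ∀ i, w i = if i ∈ Tt then ω else 1)
    (hcone : wl1norm w (x + h) ≤ wl1norm w x)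
    -- the `T j`, `j ≥ 1`, are pairwise disjoint and partition `T0ᶜ` into blocks of size
    -- at most `ak`, sorted by decreasing magnitude of the entries of `h`
    (hdisj : ∀ i j, 1 ≤ i → 1 ≤ j → i ≠ j → Disjoint (T i) (T j))
    (hcover : ∀ i : Fin N, i ∈ T0ᶜ ↔ ∃ j, 1 ≤ j ∧ i ∈ T j)
    (hcard : ∀ j, 1 ≤ j → (T j).card ≤ ak)
    (horder : ∀ j, 1 ≤ j → ∀ i ∈ T j, ∀ i' ∈ T (j + 1), |h i'| ≤ |h i|)
    -- the denominator is positive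
    (hden : 0 < Real.sqrt (1 - δa1k) - (γ / Real.sqrt a) * Real.sqrt (1 + δak)) :
    l2norm (restrict h (T0 ∪ T 1)) ≤
      (2 * ε + 2 * (Real.sqrt (1 + δak) / Real.sqrt ((ak : ℝ)))
          * (ω * l1norm (restrict x T0ᶜ) + (1 - ω) * l1norm (restrict x (Ttᶜ ∩ T0ᶜ))))
        / (Real.sqrt (1 - δa1k) - (γ / Real.sqrt a) * Real.sqrt (1 + δak)) := by
  classical
  -- basic positivity facts
  have hk1 : (1:ℝ) ≤ (k:ℝ) := by exact_mod_cast hk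
  have hkpos : (0:ℝ) < (k:ℝ) := by linarith
  have ha0 : (0:ℝ) < a := by linarith
  have hakr : (1:ℝ) < (ak:ℝ) := by rw [hak]; nlinarith
  have hak1 : 1 ≤ ak := by exact_mod_cast le_of_lt hakr
  have hakpos : (0:ℝ) < (ak:ℝ) := by linarith
  have hsqak : (0:ℝ) < Real.sqrt (ak:ℝ) := Real.sqrt_pos.mpr hakpos
  -- γ ≥ 0 and 1 - δa1k > 0
  have hγ0 : 0 ≤ γ := by
    rw [hγ]
    have := Real.sqrt_nonneg (1 + ρ - 2 * α * ρ)
    nlinarith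
  have hδak0 : 0 ≤ δak := hδak ▸ (ripConst_spec A ak).1
  have hδa1k0 : 0 ≤ δa1k := hδa1k ▸ (ripConst_spec A (ak + k)).1
  have h1δ : 0 < 1 - δa1k := by
    have h1 : 0 ≤ (γ / Real.sqrt a) * Real.sqrt (1 + δak) := by positivity
    have h2 : 0 < Real.sqrt (1 - δa1k) := by linarith
    exact Real.sqrt_pos.mp h2
  -- T0 is nonempty; a default element
  have hT0ne : T0.Nonempty := Finset.card_pos.mp (by omega)
  obtain ⟨d, _⟩ := hT0ne
  -- sorted enumeration of T0ᶜ
  set L := T0ᶜ.sort (sortRel h) with hL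
  have hsorted : L.Pairwise (sortRel h) := T0ᶜ.pairwise_sort (sortRel h)
  have hnodup : L.Nodup := T0ᶜ.sort_nodup (sortRel h)
  have hmemL : ∀ i, i ∈ L ↔ i ∈ T0ᶜ := fun i => T0ᶜ.mem_sort (sortRel h)
  set len := L.length with hlendef
  set f : ℕ → Fin N := fun p => L.getD p d with hf
  have hfget : ∀ p (hp : p < len), f p = L.get ⟨p, hp⟩ := by
    intro p hp; simp [hf, List.getD_eq_getElem?_getD, List.getElem?_eq_getElem hp,
      List.get_eq_getElem]
  have hfmem : ∀ p, p < len → f p ∈ T0ᶜ := by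
    intro p hp
    rw [hfget p hp, ← hmemL]
    exact L.get_mem _
  have hinj : ∀ p q, p < len → q < len → f p = f q → p = q := by
    intro p q hp hq hpq
    rw [hfget p hp, hfget q hq] at hpq
    exact congrArg Fin.val (List.nodup_iff_injective_get.mp hnodup hpq)
  have hdec : ∀ p q, p ≤ q → q < len → |h (f q)| ≤ |h (f p)| := by
    intro p q hpq hq
    rcases eq_or_lt_of_le hpq with rfl | hlt
    · exact le_refl _
    · have := List.Pairwise.rel_get_of_lt hsorted (a := ⟨p, lt_trans hlt hq⟩) (b := ⟨q, hq⟩) hlt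
      rw [hfget p (lt_trans hlt hq), hfget q hq]
      rcases this with h1 | ⟨h1, _⟩
      · exact le_of_lt h1
      · exact le_of_eq h1.symm
  have hsur : ∀ i ∈ T0ᶜ, ∃ p, p < len ∧ f p = i := by
    intro i hi
    obtain ⟨⟨p, hp⟩, hgp⟩ := List.mem_iff_get.mp ((hmemL i).mpr hi)
    exact ⟨p, hp, by rw [hfget p hp]; exact hgp⟩
  -- the blocks
  set B : ℕ → Finset (Fin N) := fun j => (Finset.Ico ((j-1)*ak) (min (j*ak) len)).image f
    with hB
  have hmemB : ∀ j i, i ∈ B j ↔ ∃ p, ((j-1)*ak ≤ p ∧ p < min (j*ak) len) ∧ f p = i := by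
    intro j i
    simp [hB, Finset.mem_image, Finset.mem_Ico, and_assoc]
  have hBsub : ∀ j, B j ⊆ T0ᶜ := by
    intro j i hi
    obtain ⟨p, ⟨_, hp2⟩, rfl⟩ := (hmemB j i).mp hi
    exact hfmem p (lt_of_lt_of_le hp2 (min_le_right _ _))
  have hBcard : ∀ j, 1 ≤ j → (B j).card ≤ ak := by
    intro j hj
    refine le_trans Finset.card_image_le ?_
    rw [Nat.card_Ico]
    have hje : j * ak = (j-1)*ak + ak := by
      cases j with
      | zero => omega
      | succ m => simp [Nat.succ_mul]
    omega
  -- membership of f p in B j determines j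
  have hakn : 0 < ak := hak1
  have hjdx : ∀ p, p < len → ∀ j, 1 ≤ j → (f p ∈ B j ↔ j = p / ak + 1) := by
    intro p hp j hj
    constructor
    · intro hpB
      obtain ⟨q, ⟨hq1, hq2⟩, hqp⟩ := (hmemB j _).mp hpB
      have hq : q = p := hinj q p (lt_of_lt_of_le hq2 (min_le_right _ _)) hp hqp
      subst hq
      have hj1 : j - 1 ≤ q / ak := (Nat.le_div_iff_mul_le hakn).mpr hq1
      have hj2 : q / ak < j := (Nat.div_lt_iff_lt_mul hakn).mpr
        (lt_of_lt_of_le hq2 (min_le_left _ _))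
      omega
    · intro hjeq
      subst hjeq
      refine (hmemB _ _).mpr ⟨p, ⟨?_, ?_⟩, rfl⟩
      · simpa using Nat.div_mul_le_self p ak
      · have hmod := Nat.div_add_mod p ak
        have hlt := Nat.mod_lt p hakn
        have he : (p / ak + 1 - 1) * ak = ak * (p / ak) := by
          simp [Nat.mul_comm]
        have he2 : (p / ak + 1) * ak = ak * (p / ak) + ak := by
          rw [Nat.succ_mul, Nat.mul_comm]
        rw [lt_min_iff, he2]
        omega
  have hcoverB : T0ᶜ = (Finset.Icc 1 len).biUnion B := by
    ext i
    simp only [Finset.mem_biUnion, Finset.mem_Icc]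
    constructor
    · intro hi
      obtain ⟨p, hp, rfl⟩ := hsur i hi
      refine ⟨p / ak + 1, ⟨Nat.le_add_left 1 _, ?_⟩, (hjdx p hp _ (Nat.le_add_left 1 _)).mpr rfl⟩
      exact Nat.succ_le_of_lt (lt_of_le_of_lt (Nat.div_le_self p ak) hp)
    · rintro ⟨j, _, hij⟩
      exact hBsub j hij
  have hpd : ((Finset.Icc 1 len : Finset ℕ) : Set ℕ).PairwiseDisjoint B := by
    intro j1 hj1 j2 hj2 hne
    simp only [Finset.coe_Icc, Set.mem_Icc] at hj1 hj2
    refine Finset.disjoint_left.mpr ?_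
    intro i hi1 hi2
    obtain ⟨p, ⟨_, hp2⟩, rfl⟩ := (hmemB j1 i).mp hi1
    have hp : p < len := lt_of_lt_of_le hp2 (min_le_right _ _)
    have e1 := (hjdx p hp j1 hj1.1).mp hi1
    have e2 := (hjdx p hp j2 hj2.1).mp hi2
    exact hne (e1.trans e2.symm)
  
  -- decomposition of the l1 mass of h over the blocks
  have hsum_l1 : ∑ i ∈ T0ᶜ, |h i| = ∑ j ∈ Finset.Icc 1 len, ∑ i ∈ B j, |h i| := by
    rw [hcoverB]
    exact Finset.sum_biUnion hpd
  have hres : restrict h T0ᶜ = ∑ j ∈ Finset.Icc 1 len, restrict h (B j) := by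
    rw [hcoverB]; exact restrict_biUnion h _ B hpd
  set S' := T0 ∪ B 1 with hS'
  have hB1T0 : Disjoint T0 (B 1) := by
    refine Finset.disjoint_left.mpr ?_
    intro i hi hi1
    exact (Finset.mem_compl.mp (hBsub 1 hi1)) hi
  -- the top block dominates any subset of T0ᶜ of cardinality ≤ ak
  have htop : ∀ U : Finset (Fin N), U ⊆ T0ᶜ → U.card ≤ ak →
      ∑ i ∈ U, (h i)^2 ≤ ∑ i ∈ B 1, (h i)^2 := by
    intro U hU hUc
    rcases le_or_gt len ak with hcase | hcase
    · have hsub : T0ᶜ ⊆ B 1 := by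
        intro i hi
        obtain ⟨p, hp, rfl⟩ := hsur i hi
        refine (hmemB 1 _).mpr ⟨p, ⟨by simp, ?_⟩, rfl⟩
        rw [one_mul, min_eq_right hcase]
        exact hp
      exact sum_sq_le_of_subset h (hU.trans hsub)
    · have hB1card : (B 1).card = ak := by
        have hinj' : Set.InjOn f (Finset.Ico ((1-1)*ak) (min (1*ak) len)) := by
          intro p hp q hq hpq
          simp only [Finset.coe_Ico, Set.mem_Ico] at hp hq
          exact hinj p q (lt_of_lt_of_le hp.2 (min_le_right _ _))
            (lt_of_lt_of_le hq.2 (min_le_right _ _)) hpq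
        have : (B 1).card = (Finset.Ico ((1-1)*ak) (min (1*ak) len)).card :=
          Finset.card_image_of_injOn hinj'
        rw [this, Nat.card_Ico, one_mul, min_eq_left (le_of_lt hcase)]
        simp
      rcases Finset.eq_empty_or_nonempty (U \ B 1) with hUe | hUne
      · have hsub : U ⊆ B 1 := by
          intro i hi
          by_contra hni
          exact Finset.notMem_empty i (hUe ▸ Finset.mem_sdiff.mpr ⟨hi, hni⟩)
        exact sum_sq_le_of_subset h hsub
      · have hcardle : (U \ B 1).card ≤ (B 1 \ U).card := by
          have e1 := Finset.card_sdiff_add_card_inter U (B 1)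
          have e2 := Finset.card_sdiff_add_card_inter (B 1) U
          have e3 : (U ∩ B 1).card = (B 1 ∩ U).card := by rw [Finset.inter_comm]
          omega
        have hBUne : (B 1 \ U).Nonempty := Finset.card_pos.mp
          (lt_of_lt_of_le (Finset.card_pos.mpr hUne) hcardle)
        obtain ⟨i₀, hi₀, hmin⟩ := Finset.exists_min_image (B 1 \ U) (fun i => (h i)^2) hBUne
        have hptwise : ∀ i' ∈ U \ B 1, (h i')^2 ≤ (h i₀)^2 := by
          intro i' hi'
          have hi'T : i' ∈ T0ᶜ := hU (Finset.mem_sdiff.mp hi').1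
          obtain ⟨q, hq, rfl⟩ := hsur i' hi'T
          have hqak : ak ≤ q := by
            by_contra hq2
            push_neg at hq2
            refine (Finset.mem_sdiff.mp hi').2 ((hmemB 1 _).mpr ⟨q, ⟨by simp, ?_⟩, rfl⟩)
            rw [one_mul, lt_min_iff]
            exact ⟨hq2, hq⟩
          obtain ⟨p, ⟨_, hp2⟩, rfl⟩ := (hmemB 1 _).mp (Finset.mem_sdiff.mp hi₀).1
          have hple : p ≤ q := by
            have : p < 1 * ak := lt_of_lt_of_le hp2 (min_le_left _ _)
            rw [one_mul] at this
            omega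
          have hord := hdec p q hple hq
          calc (h (f q))^2 = |h (f q)|^2 := (sq_abs _).symm
          _ ≤ |h (f p)|^2 := by nlinarith [abs_nonneg (h (f q)), abs_nonneg (h (f p))]
          _ = (h (f p))^2 := sq_abs _
        have hsum1 : ∑ i ∈ U \ B 1, (h i)^2 ≤ ((U \ B 1).card : ℝ) * (h i₀)^2 := by
          calc ∑ i ∈ U \ B 1, (h i)^2 ≤ ∑ _i ∈ U \ B 1, (h i₀)^2 :=
            Finset.sum_le_sum hptwise
          _ = ((U \ B 1).card : ℝ) * (h i₀)^2 := by rw [Finset.sum_const, nsmul_eq_mul]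
        have hconst2 : ∑ _i ∈ B 1 \ U, (h i₀)^2 = ((B 1 \ U).card : ℝ) * (h i₀)^2 := by
          rw [Finset.sum_const, nsmul_eq_mul]
        have hsum2 : ((B 1 \ U).card : ℝ) * (h i₀)^2 ≤ ∑ i ∈ B 1 \ U, (h i)^2 := by
          rw [← hconst2]
          exact Finset.sum_le_sum hmin
        have h3 : ((U \ B 1).card : ℝ) ≤ ((B 1 \ U).card : ℝ) := by exact_mod_cast hcardle
        have h4 : (0:ℝ) ≤ (h i₀)^2 := sq_nonneg _
        have hswap : ∑ i ∈ U ∩ B 1, (h i)^2 = ∑ i ∈ B 1 ∩ U, (h i)^2 := by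
          rw [Finset.inter_comm]
        have hsplitU := Finset.sum_inter_add_sum_sdiff U (B 1) (fun i => (h i)^2)
        have hsplitB := Finset.sum_inter_add_sum_sdiff (B 1) U (fun i => (h i)^2)
        have h5 : ((U \ B 1).card : ℝ) * (h i₀)^2 ≤ ((B 1 \ U).card : ℝ) * (h i₀)^2 :=
          mul_le_mul_of_nonneg_right h3 h4
        linarith
  -- block-wise ℓ2 bound via the previous block's ℓ1 mass
  have hbl : ∀ j, 1 ≤ j →
      l2norm (restrict h (B (j+1))) ≤ (∑ i ∈ B j, |h i|) / Real.sqrt (ak:ℝ) := by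
    intro j hj
    have hS1nn : 0 ≤ ∑ i ∈ B j, |h i| := Finset.sum_nonneg fun i _ => abs_nonneg _
    rcases Finset.eq_empty_or_nonempty (B (j+1)) with he | hne
    · rw [he, restrict_empty, l2norm_zero]
      positivity
    · obtain ⟨i', hi'⟩ := hne
      obtain ⟨q0, ⟨hq01, hq02⟩, _⟩ := (hmemB (j+1) i').mp hi'
      have hq01' : j * ak ≤ q0 := by simpa using hq01
      have hjlen : j * ak < len :=
        lt_of_le_of_lt hq01' (lt_of_lt_of_le hq02 (min_le_right _ _))
      have hBjcard : (B j).card = ak := by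
        have hinj' : Set.InjOn f (Finset.Ico ((j-1)*ak) (min (j*ak) len)) := by
          intro p hp q hq hpq
          simp only [Finset.coe_Ico, Set.mem_Ico] at hp hq
          exact hinj p q (lt_of_lt_of_le hp.2 (min_le_right _ _))
            (lt_of_lt_of_le hq.2 (min_le_right _ _)) hpq
        have hc : (B j).card = (Finset.Ico ((j-1)*ak) (min (j*ak) len)).card :=
          Finset.card_image_of_injOn hinj'
        rw [hc, Nat.card_Ico, min_eq_left (le_of_lt hjlen)]
        have hje : j * ak = (j-1)*ak + ak := by
          cases j with
          | zero => omega
          | succ m => simp [Nat.succ_mul]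
        omega
      have hmax : ∀ i' ∈ B (j+1), |h i'| ≤ (∑ i ∈ B j, |h i|) / (ak:ℝ) := by
        intro i'' hi''
        obtain ⟨q, ⟨hq1, hq2⟩, rfl⟩ := (hmemB (j+1) i'').mp hi''
        have hq1' : j * ak ≤ q := by simpa using hq1
        have hqlen : q < len := lt_of_lt_of_le hq2 (min_le_right _ _)
        have hea : ∀ i ∈ B j, |h (f q)| ≤ |h i| := by
          intro i hi
          obtain ⟨p, ⟨_, hp2⟩, rfl⟩ := (hmemB j i).mp hi
          have hple : p ≤ q := le_trans (le_of_lt (lt_of_lt_of_le hp2 (min_le_left _ _))) hq1'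
          exact hdec p q hple hqlen
        have hsum := Finset.sum_le_sum hea
        rw [Finset.sum_const, nsmul_eq_mul, hBjcard] at hsum
        rw [le_div_iff₀ hakpos]
        linarith
      have hsq : ∑ i ∈ B (j+1), (h i)^2 ≤ (∑ i ∈ B j, |h i|)^2 / (ak:ℝ) := by
        have h1 : ∑ i ∈ B (j+1), (h i)^2
            ≤ ∑ _i ∈ B (j+1), ((∑ i ∈ B j, |h i|) / (ak:ℝ))^2 := by
          apply Finset.sum_le_sum
          intro i hi
          have hm := hmax i hi
          nlinarith [abs_nonneg (h i), sq_abs (h i)]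
        rw [Finset.sum_const, nsmul_eq_mul] at h1
        have h2 : ((B (j+1)).card : ℝ) ≤ (ak:ℝ) := by
          exact_mod_cast hBcard (j+1) (by omega)
        have h3 : (0:ℝ) ≤ ((∑ i ∈ B j, |h i|) / (ak:ℝ))^2 := sq_nonneg _
        calc ∑ i ∈ B (j+1), (h i)^2 ≤ ((B (j+1)).card : ℝ) * ((∑ i ∈ B j, |h i|)/(ak:ℝ))^2 := h1
        _ ≤ (ak:ℝ) * ((∑ i ∈ B j, |h i|)/(ak:ℝ))^2 := by nlinarith
        _ = (∑ i ∈ B j, |h i|)^2 / (ak:ℝ) := by field_simp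
      rw [l2norm_restrict]
      calc Real.sqrt (∑ i ∈ B (j+1), (h i)^2)
          ≤ Real.sqrt ((∑ i ∈ B j, |h i|)^2 / (ak:ℝ)) := Real.sqrt_le_sqrt hsq
      _ = (∑ i ∈ B j, |h i|) / Real.sqrt (ak:ℝ) := by
          rw [Real.sqrt_div (sq_nonneg _), Real.sqrt_sq hS1nn]
  
  -- decomposition of h
  have hB1len0 : len = 0 → B 1 = ∅ := by
    intro h0
    have : T0ᶜ = ∅ := by
      rw [hcoverB, h0]
      simp
    exact Finset.subset_empty.mp (this ▸ hBsub 1)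
  have hresC : restrict h T0ᶜ = restrict h (B 1) + ∑ j ∈ Finset.Icc 2 len, restrict h (B j) := by
    rcases Nat.eq_zero_or_pos len with hlen0 | hlenpos
    · have hT0c : T0ᶜ = ∅ := by
        rw [hcoverB, hlen0]
        simp
      rw [hT0c, hB1len0 hlen0, restrict_empty, hlen0]
      simp
    · have hIcc : Finset.Icc 1 len = insert 1 (Finset.Icc 2 len) := by
        ext m
        simp only [Finset.mem_Icc, Finset.mem_insert]
        omega
      rw [hres, hIcc, Finset.sum_insert (by simp)]
  have hhdec : h = restrict h S' + ∑ j ∈ Finset.Icc 2 len, restrict h (B j) := by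
    have h0 : h = restrict h T0 + restrict h T0ᶜ := (restrict_add_compl h T0).symm
    rw [hS', restrict_union h hB1T0]
    conv_lhs => rw [h0, hresC]
    abel
  -- feasibility and triangle inequality
  have hAdec : l2norm (A.mulVec (restrict h S')) ≤ 2*ε +
      ∑ j ∈ Finset.Icc 2 len, l2norm (A.mulVec (restrict h (B j))) := by
    have hmv : A.mulVec h = A.mulVec (restrict h S')
        + ∑ j ∈ Finset.Icc 2 len, A.mulVec (restrict h (B j)) := by
      conv_lhs => rw [hhdec]
      rw [Matrix.mulVec_add, mulVec_finset_sum]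
    have heq : A.mulVec (restrict h S') = A.mulVec h
        + (- ∑ j ∈ Finset.Icc 2 len, A.mulVec (restrict h (B j))) := by
      rw [hmv]; abel
    rw [heq]
    refine le_trans (l2norm_add_le _ _) ?_
    rw [l2norm_neg]
    have hsle := l2norm_sum_le (Finset.Icc 2 len) (fun j => A.mulVec (restrict h (B j)))
    linarith
  -- RIP bounds
  have hRIPa1 := (ripConst_spec A (ak + k)).2
  have hRIPa := (ripConst_spec A ak).2
  have hS'card : S'.card ≤ ak + k := by
    refine le_trans (Finset.card_union_le _ _) ?_
    have := hBcard 1 (le_refl 1)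
    omega
  have hlow : Real.sqrt (1 - δa1k) * l2norm (restrict h S')
      ≤ l2norm (A.mulVec (restrict h S')) := by
    obtain ⟨hl, _⟩ := hRIPa1 (restrict h S') (isSparse_restrict h S' hS'card)
    rw [← hδa1k] at hl
    unfold l2norm
    calc Real.sqrt (1-δa1k) * Real.sqrt (∑ i, (restrict h S' i)^2)
        = Real.sqrt ((1-δa1k) * ∑ i, (restrict h S' i)^2) :=
          (Real.sqrt_mul (le_of_lt h1δ) _).symm
    _ ≤ Real.sqrt (∑ j, (A.mulVec (restrict h S') j)^2) := Real.sqrt_le_sqrt hl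
  have hup : ∀ j, 1 ≤ j → l2norm (A.mulVec (restrict h (B j)))
      ≤ Real.sqrt (1+δak) * l2norm (restrict h (B j)) := by
    intro j hj
    obtain ⟨_, hr⟩ := hRIPa (restrict h (B j)) (isSparse_restrict h (B j) (hBcard j hj))
    rw [← hδak] at hr
    unfold l2norm
    calc Real.sqrt (∑ i, (A.mulVec (restrict h (B j)) i)^2)
        ≤ Real.sqrt ((1+δak) * ∑ i, (restrict h (B j) i)^2) := Real.sqrt_le_sqrt hr
    _ = Real.sqrt (1+δak) * Real.sqrt (∑ i, (restrict h (B j) i)^2) :=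
          Real.sqrt_mul (by linarith) _
  -- sum of block ℓ2 norms
  have hl1nn : ∀ V : Finset (Fin N), 0 ≤ ∑ i ∈ V, |h i| :=
    fun V => Finset.sum_nonneg fun i _ => abs_nonneg _
  have hblocksum : ∑ j ∈ Finset.Icc 2 len, l2norm (restrict h (B j))
      ≤ (∑ i ∈ T0ᶜ, |h i|) / Real.sqrt (ak:ℝ) := by
    have hstep : ∑ j ∈ Finset.Icc 2 len, l2norm (restrict h (B j))
        ≤ ∑ j ∈ Finset.Icc 2 len, (∑ i ∈ B (j-1), |h i|) / Real.sqrt (ak:ℝ) := by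
      apply Finset.sum_le_sum
      intro j hj
      have hj2 : 2 ≤ j := (Finset.mem_Icc.mp hj).1
      have hje : j = (j - 1) + 1 := by omega
      calc l2norm (restrict h (B j)) = l2norm (restrict h (B ((j-1)+1))) := by rw [← hje]
      _ ≤ (∑ i ∈ B (j-1), |h i|) / Real.sqrt (ak:ℝ) := hbl (j-1) (by omega)
    refine le_trans hstep ?_
    rw [← Finset.sum_div]
    rw [div_le_div_iff_of_pos_right hsqak]
    have hreindex : ∑ j ∈ Finset.Icc 2 len, ∑ i ∈ B (j-1), |h i|
        = ∑ j ∈ Finset.Icc 1 (len-1), ∑ i ∈ B j, |h i| := by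
      apply Finset.sum_nbij' (fun j => j - 1) (fun j => j + 1)
      · intro j hj
        simp only [Finset.mem_Icc] at *
        omega
      · intro j hj
        simp only [Finset.mem_Icc] at *
        omega
      · intro j hj
        simp only [Finset.mem_Icc] at hj
        omega
      · intro j hj
        omega
      · intro j hj
        rfl
    rw [hreindex, hsum_l1]
    apply Finset.sum_le_sum_of_subset_of_nonneg
    · intro j hj
      simp only [Finset.mem_Icc] at *
      omega
    · intro j _ _
      exact hl1nn _
  
  -- the weighted cone constraint
  set X := ω * l1norm (restrict x T0ᶜ) + (1 - ω) * l1norm (restrict x (Ttᶜ ∩ T0ᶜ)) with hXdef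
  set Bs := (T0 \ Tt) ∪ (Tt \ T0) with hBsdef
  have hstep1 : ∑ i ∈ T0ᶜ, w i * |h i|
      ≤ ∑ i ∈ T0, w i * |h i| + 2 * ∑ i ∈ T0ᶜ, w i * |x i| := by
    have hw0 : ∀ i, 0 ≤ w i := by
      intro i
      rw [hw i]
      split <;> linarith
    have hsplit1 : ∑ i ∈ T0, w i * |x i + h i| + ∑ i ∈ T0ᶜ, w i * |x i + h i|
        = wl1norm w (x+h) := by
      rw [wl1norm, Finset.sum_add_sum_compl]
      apply Finset.sum_congr rfl
      intro i _
      rw [Pi.add_apply]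
    have hsplit2 : ∑ i ∈ T0, w i * |x i| + ∑ i ∈ T0ᶜ, w i * |x i| = wl1norm w x := by
      rw [wl1norm, Finset.sum_add_sum_compl]
    have hlb1 : ∑ i ∈ T0, (w i * |x i| - w i * |h i|) ≤ ∑ i ∈ T0, w i * |x i + h i| := by
      apply Finset.sum_le_sum
      intro i _
      have habs := abs_sub_abs_le_abs_sub (x i) (-(h i))
      rw [abs_neg, sub_neg_eq_add] at habs
      nlinarith [hw0 i]
    have hlb2 : ∑ i ∈ T0ᶜ, (w i * |h i| - w i * |x i|) ≤ ∑ i ∈ T0ᶜ, w i * |x i + h i| := by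
      apply Finset.sum_le_sum
      intro i _
      have habs := abs_sub_abs_le_abs_sub (h i) (-(x i))
      rw [abs_neg, sub_neg_eq_add, add_comm] at habs
      nlinarith [hw0 i]
    rw [Finset.sum_sub_distrib] at hlb1 hlb2
    linarith [hcone]
  have hwexp : ∀ (v : Fin N → ℝ) (U : Finset (Fin N)),
      ∑ i ∈ U, w i * |v i| = ω * ∑ i ∈ U ∩ Tt, |v i| + ∑ i ∈ U \ Tt, |v i| := by
    intro v U
    rw [← Finset.sum_inter_add_sum_sdiff U Tt (fun i => w i * |v i|)]
    congr 1
    · rw [Finset.mul_sum]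
      apply Finset.sum_congr rfl
      intro i hi
      rw [hw i, if_pos (Finset.mem_inter.mp hi).2]
    · apply Finset.sum_congr rfl
      intro i hi
      rw [hw i, if_neg (Finset.mem_sdiff.mp hi).2, one_mul]
  have hcone2 : ∑ i ∈ T0ᶜ, |h i| ≤ ω * ∑ i ∈ T0, |h i| + (1-ω) * ∑ i ∈ Bs, |h i|
      + 2 * X := by
    have e1 := hwexp h T0ᶜ
    have e2 := hwexp h T0
    have e3 := hwexp x T0ᶜ
    have eX1 : l1norm (restrict x T0ᶜ) = ∑ i ∈ T0ᶜ, |x i| := l1norm_restrict x T0ᶜ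
    have eX2 : l1norm (restrict x (Ttᶜ ∩ T0ᶜ)) = ∑ i ∈ T0ᶜ \ Tt, |x i| := by
      rw [l1norm_restrict]
      congr 1
      ext i
      simp only [Finset.mem_inter, Finset.mem_sdiff, Finset.mem_compl]
      tauto
    have eH1 := Finset.sum_inter_add_sum_sdiff T0ᶜ Tt (fun i => |h i|)
    have eH2 := Finset.sum_inter_add_sum_sdiff T0 Tt (fun i => |h i|)
    have eX3 := Finset.sum_inter_add_sum_sdiff T0ᶜ Tt (fun i => |x i|)
    have hdisjBs : Disjoint (T0 \ Tt) (Tt \ T0) := by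
      refine Finset.disjoint_left.mpr ?_
      intro i hi1 hi2
      exact (Finset.mem_sdiff.mp hi2).2 (Finset.mem_sdiff.mp hi1).1
    have eU : ∑ i ∈ Bs, |h i| = ∑ i ∈ T0 \ Tt, |h i| + ∑ i ∈ Tt \ T0, |h i| := by
      rw [hBsdef]
      exact Finset.sum_union hdisjBs
    have eswap : ∑ i ∈ T0ᶜ ∩ Tt, |h i| = ∑ i ∈ Tt \ T0, |h i| := by
      congr 1
      ext i
      simp only [Finset.mem_inter, Finset.mem_sdiff, Finset.mem_compl]
      tauto
    rw [e1, e2, e3, eswap] at hstep1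
    rw [hXdef, eX1, eX2, ← eH1, ← eH2, ← eX3, eU, eswap]
    ring_nf
    ring_nf at hstep1
    linarith [hstep1]
  -- Cauchy–Schwarz estimates
  have hsubS1 : ∑ i ∈ T0, (h i)^2 ≤ ∑ i, (restrict h S' i)^2 := by
    rw [sum_sq_restrict]
    exact sum_sq_le_of_subset h Finset.subset_union_left
  have hHT0CS : ∑ i ∈ T0, |h i| ≤ Real.sqrt k * l2norm (restrict h S') := by
    calc ∑ i ∈ T0, |h i| ≤ Real.sqrt (T0.card) * Real.sqrt (∑ i ∈ T0, (h i)^2) :=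
      l1_le_sqrt_card_mul h T0
    _ ≤ Real.sqrt k * l2norm (restrict h S') := by
        rw [hT0card, l2norm]
        exact mul_le_mul_of_nonneg_left (Real.sqrt_le_sqrt hsubS1) (Real.sqrt_nonneg _)
  have hTtT0sub : Tt \ T0 ⊆ T0ᶜ := by
    intro i hi
    exact Finset.mem_compl.mpr (Finset.mem_sdiff.mp hi).2
  have hcastTtT0 : ((Tt \ T0).card : ℝ) = ρ * k - α * ρ * k := by
    have := Finset.card_sdiff_add_card_inter Tt T0
    have hc : ((Tt \ T0).card : ℝ) + ((Tt ∩ T0).card : ℝ) = (Tt.card : ℝ) := by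
      exact_mod_cast congrArg (Nat.cast : ℕ → ℝ) this
    rw [hTtT0card, hTtcard] at hc
    linarith
  have hcastT0Tt : ((T0 \ Tt).card : ℝ) = k - α * ρ * k := by
    have := Finset.card_sdiff_add_card_inter T0 Tt
    have hcomm : (T0 ∩ Tt).card = (Tt ∩ T0).card := by rw [Finset.inter_comm]
    have hc : ((T0 \ Tt).card : ℝ) + ((Tt ∩ T0).card : ℝ) = (T0.card : ℝ) := by
      rw [← hcomm]
      exact_mod_cast congrArg (Nat.cast : ℕ → ℝ) this
    rw [hTtT0card, hT0card] at hc
    linarith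
  have hTtT0cardle : (Tt \ T0).card ≤ ak := by
    have hr : ((Tt \ T0).card : ℝ) ≤ (ak : ℝ) := by
      rw [hcastTtT0, hak]
      nlinarith
    exact_mod_cast hr
  have hdisjBs : Disjoint (T0 \ Tt) (Tt \ T0) := by
    refine Finset.disjoint_left.mpr ?_
    intro i hi1 hi2
    exact (Finset.mem_sdiff.mp hi2).2 (Finset.mem_sdiff.mp hi1).1
  have hBscard : ((Bs.card : ℝ)) = (1 + ρ - 2*α*ρ) * k := by
    rw [hBsdef, Finset.card_union_of_disjoint hdisjBs]
    push_cast
    rw [hcastT0Tt, hcastTtT0]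
    ring
  have hfac_nn : 0 ≤ 1 + ρ - 2*α*ρ := by
    have h0 : (0:ℝ) ≤ (Bs.card : ℝ) := Nat.cast_nonneg _
    rw [hBscard] at h0
    nlinarith
  have hsqsumBs : ∑ i ∈ Bs, (h i)^2 ≤ ∑ i, (restrict h S' i)^2 := by
    have e1 : ∑ i ∈ Bs, (h i)^2 = ∑ i ∈ T0 \ Tt, (h i)^2 + ∑ i ∈ Tt \ T0, (h i)^2 := by
      rw [hBsdef]
      exact Finset.sum_union hdisjBs
    have e2 : ∑ i ∈ T0 \ Tt, (h i)^2 ≤ ∑ i ∈ T0, (h i)^2 :=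
      sum_sq_le_of_subset h (Finset.sdiff_subset)
    have e3 : ∑ i ∈ Tt \ T0, (h i)^2 ≤ ∑ i ∈ B 1, (h i)^2 :=
      htop (Tt \ T0) hTtT0sub hTtT0cardle
    have e4 : ∑ i ∈ T0, (h i)^2 + ∑ i ∈ B 1, (h i)^2 = ∑ i, (restrict h S' i)^2 := by
      rw [sum_sq_restrict, hS']
      exact (Finset.sum_union hB1T0).symm
    linarith
  have hBsCS : ∑ i ∈ Bs, |h i|
      ≤ Real.sqrt (1 + ρ - 2*α*ρ) * Real.sqrt k * l2norm (restrict h S') := by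
    calc ∑ i ∈ Bs, |h i| ≤ Real.sqrt (Bs.card) * Real.sqrt (∑ i ∈ Bs, (h i)^2) :=
      l1_le_sqrt_card_mul h Bs
    _ ≤ Real.sqrt (Bs.card) * l2norm (restrict h S') := by
        rw [l2norm]
        exact mul_le_mul_of_nonneg_left (Real.sqrt_le_sqrt hsqsumBs) (Real.sqrt_nonneg _)
    _ = Real.sqrt (1 + ρ - 2*α*ρ) * Real.sqrt k * l2norm (restrict h S') := by
        rw [hBscard, Real.sqrt_mul hfac_nn]
  have hkey5 : ∑ i ∈ T0ᶜ, |h i| ≤ γ * Real.sqrt k * l2norm (restrict h S') + 2*X := by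
    have m1 : ω * ∑ i ∈ T0, |h i| ≤ ω * (Real.sqrt k * l2norm (restrict h S')) :=
      mul_le_mul_of_nonneg_left hHT0CS hω0
    have m2 : (1-ω) * ∑ i ∈ Bs, |h i|
        ≤ (1-ω) * (Real.sqrt (1 + ρ - 2*α*ρ) * Real.sqrt k * l2norm (restrict h S')) :=
      mul_le_mul_of_nonneg_left hBsCS (by linarith)
    have hring : γ * Real.sqrt k * l2norm (restrict h S')
        = ω * (Real.sqrt k * l2norm (restrict h S'))
        + (1-ω) * (Real.sqrt (1 + ρ - 2*α*ρ) * Real.sqrt k * l2norm (restrict h S')) := by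
      rw [hγ]
      ring
    linarith [hcone2]
  -- final assembly
  have hsq1δak : (0:ℝ) ≤ Real.sqrt (1 + δak) := Real.sqrt_nonneg _
  have hchain : Real.sqrt (1-δa1k) * l2norm (restrict h S')
      ≤ 2*ε + Real.sqrt (1+δak)
        * ((γ * Real.sqrt k * l2norm (restrict h S') + 2*X) / Real.sqrt (ak:ℝ)) := by
    have s1 : ∑ j ∈ Finset.Icc 2 len, l2norm (A.mulVec (restrict h (B j)))
        ≤ Real.sqrt (1+δak) * ∑ j ∈ Finset.Icc 2 len, l2norm (restrict h (B j)) := by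
      rw [Finset.mul_sum]
      apply Finset.sum_le_sum
      intro j hj
      have hj1 : 1 ≤ j := le_trans one_le_two (Finset.mem_Icc.mp hj).1
      exact hup j hj1
    have s2 : Real.sqrt (1+δak) * ∑ j ∈ Finset.Icc 2 len, l2norm (restrict h (B j))
        ≤ Real.sqrt (1+δak) * ((∑ i ∈ T0ᶜ, |h i|) / Real.sqrt (ak:ℝ)) :=
      mul_le_mul_of_nonneg_left hblocksum hsq1δak
    have s3 : (∑ i ∈ T0ᶜ, |h i|) / Real.sqrt (ak:ℝ)
        ≤ (γ * Real.sqrt k * l2norm (restrict h S') + 2*X) / Real.sqrt (ak:ℝ) := by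
      rw [div_eq_mul_inv, div_eq_mul_inv]
      exact mul_le_mul_of_nonneg_right hkey5 (by positivity)
    have s3' := mul_le_mul_of_nonneg_left s3 hsq1δak
    linarith [hlow, hAdec]
  have hsqa : Real.sqrt (ak:ℝ) = Real.sqrt a * Real.sqrt k := by
    rw [hak, Real.sqrt_mul (le_of_lt ha0)]
  have hsqa0 : 0 < Real.sqrt a := Real.sqrt_pos.mpr ha0
  have hsqk0 : 0 < Real.sqrt k := Real.sqrt_pos.mpr hkpos
  have hid : Real.sqrt (1+δak)
        * ((γ * Real.sqrt k * l2norm (restrict h S') + 2*X) / Real.sqrt (ak:ℝ))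
      = (γ / Real.sqrt a) * Real.sqrt (1+δak) * l2norm (restrict h S')
        + 2 * (Real.sqrt (1+δak) / Real.sqrt (ak:ℝ)) * X := by
    rw [hsqa]
    field_simp
  have hfinal1 : l2norm (restrict h S')
      ≤ (2 * ε + 2 * (Real.sqrt (1 + δak) / Real.sqrt ((ak : ℝ))) * X)
        / (Real.sqrt (1 - δa1k) - (γ / Real.sqrt a) * Real.sqrt (1 + δak)) := by
    rw [le_div_iff₀ hden]
    rw [hid] at hchain
    ring_nf
    ring_nf at hchain
    linarith
  have hT1sub : T 1 ⊆ T0ᶜ := fun i hi => (hcover i).mpr ⟨1, le_refl 1, hi⟩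
  have hT1T0 : Disjoint T0 (T 1) := by
    refine Finset.disjoint_left.mpr ?_
    intro i hi hi1
    exact (Finset.mem_compl.mp (hT1sub hi1)) hi
  have hfinal2 : l2norm (restrict h (T0 ∪ T 1)) ≤ l2norm (restrict h S') := by
    rw [l2norm_restrict, l2norm]
    apply Real.sqrt_le_sqrt
    rw [Finset.sum_union hT1T0, sum_sq_restrict, hS', Finset.sum_union hB1T0]
    have := htop (T 1) hT1sub (hcard 1 (le_refl 1))
    linarith
  exact le_trans hfinal2 hfinal1
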